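/- arXiv:1901.07030 — 2 statements merged into one kernel-verified Lean document; each statement's English description precedes it below -/
import Mathlib

section
/- Let X be a variety over k such that the automorphism group of X (automorphisms of X as a scheme over k) acts transitively on the closed points of X, i.e., for any two closed points x, y of X there exists an automorphism g of X over k with g(x) = y. Then X is rational if and only if X is locally flattenable. -/
open AlgebraicGeometry CategoryTheory

noncomputable section

abbrev Speck (k : Type) [CommRing k] : Scheme := Spec (CommRingCat.of k)

/-- Affine `n`-space over `k`. -/
abbrev AffSp (k : Type) [CommRing k] (n : ℕ) : Scheme :=
  Spec (CommRingCat.of (MvPolynomial (Fin n) k))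

/-- The structure morphism of affine `n`-space over `k`. -/
def AffSp.str (k : Type) [CommRing k] (n : ℕ) : AffSp k n ⟶ Speck k :=
  Spec.map (CommRingCat.ofHom (algebraMap k (MvPolynomial (Fin n) k)))

/-- A variety `X` over `k` (given by its structure morphism `s`) is flattenable if it admits
an open immersion over `k` into some affine space `𝔸ⁿ` over `k`. -/
def Flattenable (k : Type) [CommRing k] {X : Scheme} (s : X ⟶ Speck k) : Prop :=
  ∃ (n : ℕ) (f : X ⟶ AffSp k n), IsOpenImmersion f ∧ f ≫ AffSp.str k n = s

/-- `X` is locally flattenable if every point has a flattenable open neighbourhood. -/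
def LocallyFlattenable (k : Type) [CommRing k] {X : Scheme} (s : X ⟶ Speck k) : Prop :=
  ∀ x : X, ∃ U : X.Opens, x ∈ U ∧ Flattenable k (U.ι ≫ s)

/-- `X` is rational if some nonempty open subscheme of `X` is flattenable. -/
def RationalVariety (k : Type) [CommRing k] {X : Scheme} (s : X ⟶ Speck k) : Prop :=
  ∃ U : X.Opens, (U : Set X).Nonempty ∧ Flattenable k (U.ι ≫ s)

theorem myJac (k : Type) [Field k] (X : Scheme) (s : X ⟶ Spec (CommRingCat.of k))
    (hft : LocallyOfFiniteType s) : JacobsonSpace X := by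
  rw [TopologicalSpace.IsOpenCover.jacobsonSpace_iff (U := fun U : X.affineOpens => U.1) (iSup_affineOpens_eq_top X)]
  intro U
  have hU : IsAffineOpen U.1 := U.2
  have htop : IsAffineOpen (⊤ : (Spec (CommRingCat.of k)).Opens) := isAffineOpen_top _
  have hQ : RingHom.FiniteType (s.appLE ⊤ U.1 le_top).hom :=
    HasRingHomProperty.appLE (P := @LocallyOfFiniteType) s hft ⟨⊤, htop⟩ U (le_top)
  have hsurj : Function.Surjective ((Scheme.ΓSpecIso (CommRingCat.of k)).inv.hom) :=
    (ConcreteCategory.bijective_of_isIso (C := CommRingCat) _).2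
  have : IsJacobsonRing (CommRingCat.of k) := (inferInstance : IsJacobsonRing k)
  have h1 : RingHom.FiniteType (((Scheme.ΓSpecIso (CommRingCat.of k)).inv ≫
      s.appLE ⊤ U.1 le_top) : CommRingCat.of k ⟶ Γ(X, U.1)).hom :=
    hQ.comp (RingHom.FiniteType.of_surjective _ hsurj)
  have : IsJacobsonRing (Γ(X, U.1)) := h1.isJacobsonRing
  have : JacobsonSpace (Spec Γ(X, U.1)) := by
    show JacobsonSpace (PrimeSpectrum Γ(X, U.1))
    infer_instance
  exact JacobsonSpace.of_isOpenEmbedding (Scheme.homeoOfIso hU.isoSpec).isOpenEmbedding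

/-- if the automorphism group of a variety `X` over `k` acts transitively on the
closed points of `X`, then `X` is rational iff it is locally flattenable. -/
theorem stmt0 (k : Type) [Field k] [IsAlgClosed k] [CharZero k]
    (X : Scheme) (s : X ⟶ Speck k) [IsIntegral X]
    (hft : LocallyOfFiniteType s) (hqc : QuasiCompact s)
    (htrans : ∀ x y : X, IsClosed ({x} : Set X) → IsClosed ({y} : Set X) →
      ∃ g : X ≅ X, g.hom ≫ s = s ∧ g.hom.base x = y) :
    RationalVariety k s ↔ LocallyFlattenable k s := by
  constructor
  · rintro ⟨U, hUne, hUflat⟩ x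
    have hJ : JacobsonSpace X := myJac k X s hft
    obtain ⟨y, hyx, hy⟩ := nonempty_inter_closedPoints
      (Z := closure {x}) ⟨x, subset_closure rfl⟩ isClosed_closure.isLocallyClosed
    obtain ⟨z, hzU, hz⟩ := nonempty_inter_closedPoints hUne U.2.isLocallyClosed
    obtain ⟨g, hgs, hgz⟩ := htrans z y hz hy
    refine ⟨g.inv ⁻¹ᵁ U, ?_, ?_⟩
    · have hyV : y ∈ g.inv ⁻¹ᵁ U := by
        show g.inv.base y ∈ U
        have : g.inv.base (g.hom.base z) = z := by
          rw [← Scheme.Hom.comp_apply, g.hom_inv_id]; rfl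
        rw [← hgz, this]; exact hzU
      have := mem_closure_iff.mp hyx _ (g.inv ⁻¹ᵁ U).2 hyV
      obtain ⟨w, hw1, hw2⟩ := this
      rwa [Set.mem_singleton_iff.mp hw2] at hw1
    · obtain ⟨n, f, hfoi, hfs⟩ := hUflat
      have hginv : g.inv ≫ s = s := by
        nth_rewrite 1 [← hgs]
        rw [Iso.inv_hom_id_assoc]
      have hrange : Set.range ((g.inv ⁻¹ᵁ U).ι ≫ g.inv).base ⊆ Set.range U.ι.base := by
        rintro _ ⟨v, rfl⟩
        rw [Scheme.Opens.range_ι]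
        exact v.2
      set e : ((g.inv ⁻¹ᵁ U) : Scheme) ⟶ (U : Scheme) := IsOpenImmersion.lift U.ι _ hrange with he
      have hefac : e ≫ U.ι = (g.inv ⁻¹ᵁ U).ι ≫ g.inv := IsOpenImmersion.lift_fac _ _ hrange
      have heoi : IsOpenImmersion e := by
        have : IsOpenImmersion (e ≫ U.ι) := by rw [hefac]; infer_instance
        exact IsOpenImmersion.of_comp e U.ι
      refine ⟨n, e ≫ f, inferInstance, ?_⟩
      rw [Category.assoc, hfs, ← Category.assoc, hefac, Category.assoc, hginv]
  · intro h
    have : Nonempty X := inferInstance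
    obtain ⟨U, hxU, hUflat⟩ := h (Classical.arbitrary X)
    exact ⟨U, ⟨_, hxU⟩, hUflat⟩
end
end

section
/- Let Z be a variety over k which is locally flattenable, let X be a variety over k, and let φ : X → Z be a surjective morphism of schemes over k which is a locally trivial fibration with fiber 𝔸ⁿ, meaning: for every point z of Z there exist an open neighbourhood U of z in Z and an isomorphism of schemes over U between φ⁻¹(U) and the fiber product U ×ₖ 𝔸ⁿ. Then X is locally flattenable. -/
open AlgebraicGeometry CategoryTheory CategoryTheory.Limits

noncomputable section

/- ### Auxiliary material -/

open TensorProduct in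
/-- The tensor product of polynomial rings is a polynomial ring. -/
def polyTensorEquiv (k : Type) [CommRing k] (m n : ℕ) :
    (MvPolynomial (Fin m) k ⊗[k] MvPolynomial (Fin n) k) ≃ₐ[k] MvPolynomial (Fin (m + n)) k :=
  (Algebra.TensorProduct.comm k _ _).trans <|
    ((MvPolynomial.algebraTensorAlgEquiv (σ := Fin m) k
        (MvPolynomial (Fin n) k)).restrictScalars k).trans <|
      ((MvPolynomial.sumAlgEquiv k (Fin m) (Fin n)).symm).trans
        (MvPolynomial.renameEquiv k finSumFinEquiv)

open TensorProduct in
/-- `𝔸ᵐ ×ₖ 𝔸ⁿ ≅ 𝔸^(m+n)`. -/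
def affIso (k : Type) [CommRing k] (m n : ℕ) :
    pullback (AffSp.str k m) (AffSp.str k n) ≅ AffSp k (m + n) :=
  pullbackSpecIso k (MvPolynomial (Fin m) k) (MvPolynomial (Fin n) k) ≪≫
    { hom := Spec.map (CommRingCat.ofHom ((polyTensorEquiv k m n).symm :
        MvPolynomial (Fin (m + n)) k →+* _))
      inv := Spec.map (CommRingCat.ofHom ((polyTensorEquiv k m n) :
        _ →+* MvPolynomial (Fin (m + n)) k))
      hom_inv_id := by
        rw [← Spec.map_comp, ← Spec.map_id]
        congr 1
        ext x : 1
        simp [← CommRingCat.ofHom_comp]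
        exact RingHom.ext fun y => by simp
      inv_hom_id := by
        rw [← Spec.map_comp, ← Spec.map_id]
        congr 1
        ext x : 1
        simp [← CommRingCat.ofHom_comp]
        exact RingHom.ext fun y => by simp }

open TensorProduct in
lemma affIso_hom_str (k : Type) [CommRing k] (m n : ℕ) :
    (affIso k m n).hom ≫ AffSp.str k (m + n) =
      pullback.fst (AffSp.str k m) (AffSp.str k n) ≫ AffSp.str k m := by
  have h0 : (affIso k m n).hom =
      (pullbackSpecIso k (MvPolynomial (Fin m) k) (MvPolynomial (Fin n) k)).hom ≫
        Spec.map (CommRingCat.ofHom ((polyTensorEquiv k m n).symm :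
          MvPolynomial (Fin (m + n)) k →+* _)) := rfl
  have h1 : pullback.fst (AffSp.str k m) (AffSp.str k n) =
      (pullbackSpecIso k (MvPolynomial (Fin m) k) (MvPolynomial (Fin n) k)).hom ≫
        Spec.map (CommRingCat.ofHom (Algebra.TensorProduct.includeLeftRingHom)) :=
    (pullbackSpecIso_hom_fst _ _ _).symm
  rw [h0, h1]
  refine (Category.assoc _ _ _).trans ((congrArg (_ ≫ ·) ?_).trans (Category.assoc _ _ _).symm)
  simp only [AffSp.str]
  rw [← Spec.map_comp, ← Spec.map_comp]
  congr 1
  ext x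
  show (polyTensorEquiv k m n).symm (algebraMap k _ x) =
    Algebra.TensorProduct.includeLeftRingHom (algebraMap k _ x)
  rw [AlgEquiv.commutes]
  simp [Algebra.TensorProduct.includeLeftRingHom_apply, Algebra.TensorProduct.algebraMap_apply]

/-- if `φ : X → Z` is a surjective, locally trivial fibration with fiber `𝔸ⁿ`
(trivialized by isomorphisms over the base), and `Z` is locally flattenable, then `X` is
locally flattenable. -/
theorem stmt1 (k : Type) [Field k] [IsAlgClosed k] [CharZero k] (n : ℕ)
    (X Z : Scheme) (sZ : Z ⟶ Speck k)
    [IsIntegral X] [IsIntegral Z]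
    (hftZ : LocallyOfFiniteType sZ) (hqcZ : QuasiCompact sZ)
    (φ : X ⟶ Z)
    (hftX : LocallyOfFiniteType (φ ≫ sZ)) (hqcX : QuasiCompact (φ ≫ sZ))
    (hsurj : Function.Surjective φ.base)
    (htriv : ∀ z : Z, ∃ (U : Z.Opens) (_ : z ∈ U)
      (e : ((φ ⁻¹ᵁ U) : Scheme) ≅ pullback (U.ι ≫ sZ) (AffSp.str k n)),
        e.hom ≫ pullback.fst (U.ι ≫ sZ) (AffSp.str k n) ≫ U.ι = (φ ⁻¹ᵁ U).ι ≫ φ)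
    (hZ : LocallyFlattenable k sZ) :
    LocallyFlattenable k (φ ≫ sZ) := by
  intro x
  obtain ⟨U, hzU, e, he⟩ := htriv (φ.base x)
  obtain ⟨V, hzV, m, f, hf, hfc⟩ := hZ (φ.base x)
  -- the neighbourhood of `x`
  set W : X.Opens := φ ⁻¹ᵁ (U ⊓ V) with hW
  have hxW : x ∈ W := ⟨hzU, hzV⟩
  -- `W ⟶ φ⁻¹ᵁ U`
  have hsub₁ : Set.range W.ι.base ⊆ Set.range (φ ⁻¹ᵁ U).ι.base := by
    rw [Scheme.Opens.range_ι, Scheme.Opens.range_ι]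
    exact fun p hp => (hp : φ.base p ∈ U ⊓ V).1
  set t₁ : (W : Scheme) ⟶ ((φ ⁻¹ᵁ U : X.Opens) : Scheme) :=
    IsOpenImmersion.lift (φ ⁻¹ᵁ U).ι W.ι hsub₁ with ht₁
  have fac₁ : t₁ ≫ (φ ⁻¹ᵁ U).ι = W.ι := IsOpenImmersion.lift_fac _ _ hsub₁
  haveI : IsOpenImmersion t₁ := by
    haveI : IsOpenImmersion (t₁ ≫ (φ ⁻¹ᵁ U).ι) := by rw [fac₁]; infer_instance
    exact IsOpenImmersion.of_comp t₁ (φ ⁻¹ᵁ U).ι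
  set t₂ : (W : Scheme) ⟶ pullback (U.ι ≫ sZ) (AffSp.str k n) := t₁ ≫ e.hom with ht₂
  haveI : IsOpenImmersion t₂ := by rw [ht₂]; infer_instance
  have key : t₂ ≫ pullback.fst (U.ι ≫ sZ) (AffSp.str k n) ≫ U.ι = W.ι ≫ φ := by
    rw [ht₂, Category.assoc, he, ← Category.assoc, fac₁]
  have key' := reassoc_of% key
  -- the map `W ⟶ U ⊓ V`
  have hsub₂ : Set.range (W.ι ≫ φ).base ⊆ Set.range (U ⊓ V : Z.Opens).ι.base := by
    rw [Scheme.Opens.range_ι]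
    rintro p ⟨w, rfl⟩
    have h0 : W.ι.base w ∈ Set.range W.ι.base := ⟨w, rfl⟩
    rw [Scheme.Opens.range_ι] at h0
    have h1 : φ.base (W.ι.base w) ∈ U ⊓ V := h0
    simpa using h1
  set wT : (W : Scheme) ⟶ ((U ⊓ V : Z.Opens) : Scheme) :=
    IsOpenImmersion.lift (U ⊓ V : Z.Opens).ι (W.ι ≫ φ) hsub₂ with hwT
  have fac₂ : wT ≫ (U ⊓ V : Z.Opens).ι = W.ι ≫ φ := IsOpenImmersion.lift_fac _ _ hsub₂
  have fac₂' := reassoc_of% fac₂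
  -- inclusions `U ⊓ V ⟶ U` and `U ⊓ V ⟶ V`
  have hsubU : Set.range (U ⊓ V : Z.Opens).ι.base ⊆ Set.range U.ι.base := by
    rw [Scheme.Opens.range_ι, Scheme.Opens.range_ι]; exact fun p hp => hp.1
  have hsubV : Set.range (U ⊓ V : Z.Opens).ι.base ⊆ Set.range V.ι.base := by
    rw [Scheme.Opens.range_ι, Scheme.Opens.range_ι]; exact fun p hp => hp.2
  set c : ((U ⊓ V : Z.Opens) : Scheme) ⟶ (U : Scheme) :=
    IsOpenImmersion.lift U.ι (U ⊓ V : Z.Opens).ι hsubU with hc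
  have facc : c ≫ U.ι = (U ⊓ V : Z.Opens).ι := IsOpenImmersion.lift_fac _ _ hsubU
  have facc' := reassoc_of% facc
  haveI : IsOpenImmersion c := by
    haveI : IsOpenImmersion (c ≫ U.ι) := by rw [facc]; infer_instance
    exact IsOpenImmersion.of_comp c U.ι
  set d : ((U ⊓ V : Z.Opens) : Scheme) ⟶ (V : Scheme) :=
    IsOpenImmersion.lift V.ι (U ⊓ V : Z.Opens).ι hsubV with hd
  have facd : d ≫ V.ι = (U ⊓ V : Z.Opens).ι := IsOpenImmersion.lift_fac _ _ hsubV
  have facd' := reassoc_of% facd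
  haveI : IsOpenImmersion d := by
    haveI : IsOpenImmersion (d ≫ V.ι) := by rw [facd]; infer_instance
    exact IsOpenImmersion.of_comp d V.ι
  -- the restricted pullback
  set j : pullback (c ≫ U.ι ≫ sZ) (AffSp.str k n) ⟶ pullback (U.ι ≫ sZ) (AffSp.str k n) :=
    pullback.map _ _ _ _ c (𝟙 _) (𝟙 _) (by simp) (by simp) with hj
  haveI : IsOpenImmersion j := by
    rw [hj]
    exact Scheme.pullback_map_isOpenImmersion _ _ _ _ c (𝟙 _) (𝟙 _) (by simp) (by simp)
  have hdf : (c ≫ U.ι ≫ sZ) ≫ 𝟙 (Speck k) = (d ≫ f) ≫ AffSp.str k m := by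
    simp only [Category.comp_id, Category.assoc, hfc, facd', facc']
  set j' : pullback (c ≫ U.ι ≫ sZ) (AffSp.str k n) ⟶ pullback (AffSp.str k m) (AffSp.str k n) :=
    pullback.map _ _ _ _ (d ≫ f) (𝟙 _) (𝟙 _) hdf (by simp) with hj'
  haveI : IsOpenImmersion j' := by
    rw [hj']
    exact Scheme.pullback_map_isOpenImmersion _ _ _ _ (d ≫ f) (𝟙 _) (𝟙 _) hdf (by simp)
  -- the lift `u : W ⟶ P'`
  have hcomm : wT ≫ c ≫ U.ι ≫ sZ = (t₂ ≫ pullback.snd (U.ι ≫ sZ) (AffSp.str k n)) ≫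
      AffSp.str k n := by
    simp only [Category.assoc, ← pullback.condition, facc', fac₂', key']
  set u : (W : Scheme) ⟶ pullback (c ≫ U.ι ≫ sZ) (AffSp.str k n) :=
    pullback.lift wT (t₂ ≫ pullback.snd _ _) hcomm with hu
  have huj : u ≫ j = t₂ := by
    apply pullback.hom_ext
    · rw [← cancel_mono U.ι]
      simp only [hj, hu, Category.assoc, pullback.lift_fst, pullback.lift_fst_assoc,
        facc', fac₂, key]
      rw [facc, fac₂]
    · simp only [hj, hu, Category.assoc, pullback.lift_snd, pullback.lift_snd_assoc,
        Category.comp_id]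
  haveI : IsOpenImmersion u := by
    haveI : IsOpenImmersion (u ≫ j) := by rw [huj]; infer_instance
    exact IsOpenImmersion.of_comp u j
  -- the final open immersion
  refine ⟨W, hxW, m + n, u ≫ j' ≫ (affIso k m n).hom, inferInstance, ?_⟩
  simp only [Category.assoc, affIso_hom_str]
  simp only [hj', hu, pullback.lift_fst, pullback.lift_fst_assoc, Category.assoc,
    hfc, facd', fac₂']
end
end
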